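/- Let m* ∈ ℝ^d and let Σ* be a symmetric positive definite d×d real matrix. Then the range of the map φ_{μ*} over all Gaussian measures on ℝ^d, i.e., the set {φ_{μ*}(N(m,Σ)) : m ∈ ℝ^d, Σ symmetric positive semidefinite}, equals {(a,V) ∈ Ξ_d : V + I_d is positive semidefinite}. -/

import Mathlib

open MeasureTheory Matrix Filter ProbabilityTheory

open Classical in
/-- The unique symmetric positive semidefinite square root of a positive semidefinite real
matrix (junk value `0` if the matrix is not positive semidefinite). -/
noncomputable def matSqrt {d : ℕ} (A : Matrix (Fin d) (Fin d) ℝ) : Matrix (Fin d) (Fin d) ℝ :=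
  if h : A.PosSemidef then
    h.1.eigenvectorUnitary.1 * diagonal ((↑) ∘ (√·) ∘ h.1.eigenvalues) *
      (star h.1.eigenvectorUnitary : Matrix (Fin d) (Fin d) ℝ) else 0

/-- `S(Σ₁, Σ₂) = Σ₁^{-1/2} (Σ₁^{1/2} Σ₂ Σ₁^{1/2})^{1/2} Σ₁^{-1/2}`. -/
noncomputable def Smat {d : ℕ} (S1 S2 : Matrix (Fin d) (Fin d) ℝ) : Matrix (Fin d) (Fin d) ℝ :=
  (matSqrt S1)⁻¹ * matSqrt (matSqrt S1 * S2 * matSqrt S1) * (matSqrt S1)⁻¹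

open Classical in
/-- The Gaussian measure `N(m, Σ)` on `ℝ^d`, realized as the pushforward of a product of
standard real Gaussians under `x ↦ m + Σ^{1/2} x` (junk value `0` if `Σ` is not psd). -/
noncomputable def gaussianMeasure {d : ℕ} (m : Fin d → ℝ) (S : Matrix (Fin d) (Fin d) ℝ) :
    Measure (Fin d → ℝ) :=
  if _h : S.PosSemidef then
    (Measure.pi fun _ : Fin d => gaussianReal 0 1).map (fun x => m + (matSqrt S).mulVec x)
  else 0

/-- Squared euclidean distance on `ℝ^d`. -/
def sqDist {d : ℕ} (x y : Fin d → ℝ) : ℝ := ∑ i, (x i - y i) ^ 2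

/-- The 2-Wasserstein distance between two measures on `ℝ^d` (with the euclidean cost). -/
noncomputable def W2 {d : ℕ} (μ ν : Measure (Fin d → ℝ)) : ℝ :=
  Real.sqrt (⨅ π ∈ {π : Measure ((Fin d → ℝ) × (Fin d → ℝ)) |
      IsProbabilityMeasure π ∧ π.map Prod.fst = μ ∧ π.map Prod.snd = ν},
    ∫⁻ p, ENNReal.ofReal (sqDist p.1 p.2) ∂π).toReal

/-- The inner product `⟨(a,V),(b,U)⟩_{(m*,Σ*)}` on `Ξ_d`. -/
noncomputable def xiInner {d : ℕ} (ms : Fin d → ℝ) (Ss : Matrix (Fin d) (Fin d) ℝ)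
    (a : Fin d → ℝ) (V : Matrix (Fin d) (Fin d) ℝ)
    (b : Fin d → ℝ) (U : Matrix (Fin d) (Fin d) ℝ) : ℝ :=
  (a + V.mulVec ms) ⬝ᵥ (b + U.mulVec ms) + (V * Ss * U).trace

/-- The squared norm `‖(a,V)‖²_{(m*,Σ*)} = ‖a + V m*‖² + tr(V Σ* V)` on `Ξ_d`. -/
noncomputable def xiNormSq {d : ℕ} (ms : Fin d → ℝ) (Ss : Matrix (Fin d) (Fin d) ℝ)
    (a : Fin d → ℝ) (V : Matrix (Fin d) (Fin d) ℝ) : ℝ :=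
  (∑ i, (a i + V.mulVec ms i) ^ 2) + (V * Ss * V).trace

/-- The norm `‖(a,V)‖_{(m*,Σ*)}` on `Ξ_d`. -/
noncomputable def xiNorm {d : ℕ} (ms : Fin d → ℝ) (Ss : Matrix (Fin d) (Fin d) ℝ)
    (a : Fin d → ℝ) (V : Matrix (Fin d) (Fin d) ℝ) : ℝ :=
  Real.sqrt (xiNormSq ms Ss a V)

open scoped MatrixOrder in
lemma matSqrt_eq_cfc {d : ℕ} {A : Matrix (Fin d) (Fin d) ℝ} (hA : A.PosSemidef) :
    matSqrt A = CFC.sqrt A := by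
  rw [CFC.sqrt_eq_cfc, cfc_nnreal_eq_real _ A, hA.1.cfc_eq, matSqrt, dif_pos hA]
  simp only [IsHermitian.cfc, Unitary.conjStarAlgAut_apply]
  congr 3
  ext i
  simp [Real.coe_sqrt, Real.coe_toNNReal', max_eq_left (hA.eigenvalues_nonneg i)]

open scoped MatrixOrder in
lemma matSqrt_posSemidef {d : ℕ} {A : Matrix (Fin d) (Fin d) ℝ} (hA : A.PosSemidef) :
    (matSqrt A).PosSemidef := by
  rw [matSqrt_eq_cfc hA]; exact nonneg_iff_posSemidef.mp (CFC.sqrt_nonneg A)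

open scoped MatrixOrder in
lemma matSqrt_mul_self {d : ℕ} {A : Matrix (Fin d) (Fin d) ℝ} (hA : A.PosSemidef) :
    matSqrt A * matSqrt A = A := by
  rw [matSqrt_eq_cfc hA]; exact CFC.sqrt_mul_sqrt_self A hA.nonneg

open scoped MatrixOrder in
lemma matSqrt_eq_of_sq {d : ℕ} {A B : Matrix (Fin d) (Fin d) ℝ} (hB : B.PosSemidef)
    (h : B ^ 2 = A) : matSqrt A = B := by
  have hA : A.PosSemidef := h ▸ hB.pow 2
  rw [matSqrt_eq_cfc hA]; exact CFC.sqrt_unique (by rw [← h, pow_two]) hB.nonneg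

/-- For a reference `μ* = N(m*,Σ*)` with `Σ*` symmetric positive definite,
the range of `φ_{μ*}` over all Gaussian measures `N(m,Σ)` (with `Σ` symmetric positive
semidefinite) equals `{(a,V) ∈ Ξ_d : V + I is positive semidefinite}`. -/
theorem stmt_9 {d : ℕ} (ms : Fin d → ℝ) (Ss : Matrix (Fin d) (Fin d) ℝ) (hSs : Ss.PosDef) :
    {p : (Fin d → ℝ) × Matrix (Fin d) (Fin d) ℝ |
        ∃ m S, S.PosSemidef ∧ p = (m - (Smat Ss S).mulVec ms, Smat Ss S - 1)}
      = {p : (Fin d → ℝ) × Matrix (Fin d) (Fin d) ℝ | (p.2 + 1).PosSemidef} := by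
  have hpsd : Ss.PosSemidef := hSs.posSemidef
  set B := matSqrt Ss with hB
  have hBdef : B = matSqrt Ss := by rw [hB]
  have hBpsd : B.PosSemidef := hBdef ▸ matSqrt_posSemidef hpsd
  have hBherm : B.IsHermitian := hBpsd.isHermitian
  have hBB : B * B = Ss := hBdef ▸ matSqrt_mul_self hpsd
  have hBdet : IsUnit B.det := by
    have : B.det * B.det = Ss.det := by rw [← det_mul, hBB]
    have hd : Ss.det ≠ 0 := hSs.det_pos.ne'
    exact isUnit_iff_ne_zero.mpr (fun h => hd (by rw [← this, h, mul_zero]))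
  have hBinvB : B⁻¹ * B = 1 := nonsing_inv_mul B hBdet
  have hBBinv : B * B⁻¹ = 1 := mul_nonsing_inv B hBdet
  have hBinvH : (B⁻¹).IsHermitian := hBherm.inv
  ext p
  simp only [Set.mem_setOf_eq]
  constructor
  · rintro ⟨m, S, hS, rfl⟩
    have hmid : (B * S * B).PosSemidef := by
      have := hS.conjTranspose_mul_mul_same B
      rwa [hBherm.eq] at this
    have hsq : (matSqrt (B * S * B)).PosSemidef := by
      exact matSqrt_posSemidef hmid
    have : (Smat Ss S).PosSemidef := by
      rw [Smat, ← hB]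
      have := hsq.conjTranspose_mul_mul_same B⁻¹
      rwa [hBinvH.eq] at this
    simpa using this
  · intro hp
    set W := p.2 + 1 with hW
    have hWherm : W.IsHermitian := hp.isHermitian
    refine ⟨p.1 + W.mulVec ms, W * Ss * W, ?_, ?_⟩
    · have := hpsd.mul_mul_conjTranspose_same W
      rwa [hWherm.eq] at this
    · have hBWB : (B * W * B).PosSemidef := by
        have := hp.conjTranspose_mul_mul_same B
        rwa [hBherm.eq] at this
      have hinner : B * (W * Ss * W) * B = (B * W * B) ^ 2 := by
        rw [← hBB, pow_two]; noncomm_ring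
      have hSmat : Smat Ss (W * Ss * W) = W := by
        have hmid : (B * (W * Ss * W) * B).PosSemidef := hinner ▸ (hBWB.pow 2)
        have hsqrt : matSqrt (B * (W * Ss * W) * B) = B * W * B := by
          exact matSqrt_eq_of_sq hBWB hinner.symm
        rw [Smat, ← hB, hsqrt]
        calc B⁻¹ * (B * W * B) * B⁻¹ = (B⁻¹ * B) * W * (B * B⁻¹) := by
              simp only [Matrix.mul_assoc]
            _ = W := by rw [hBinvB, hBBinv, Matrix.one_mul, Matrix.mul_one]
      rw [hSmat]
      ext <;> simp [hW]
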